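/- Let G be a group, K a field, A a finite-dimensional K-vector space, Σ ⊆ A^G a linear subshift of finite type, and τ : Σ → Σ a linear cellular automaton. Then τ is nilpotent (τ^{n_0} = 0 for some n_0 ≥ 1) if and only if Ω(τ) := ⋂_{n≥1} τⁿ(Σ) = {0}. -/

import Mathlib

def shiftSigma (G : Type*) [Group G] {A : Type*} (D : Set G) (P : Set (D → A)) :
    Set (G → A) :=
  {x | ∀ g : G, (fun d : D => x (g * (d : G))) ∈ P}

def prodiscreteTop (G A : Type*) : TopologicalSpace (G → A) :=
  @Pi.topologicalSpace G (fun _ => A) (fun _ => ⊥)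

def IsLinearSubshift (K : Type*) {G A : Type*} [Field K] [Group G] [AddCommGroup A]
    [Module K A] (S : Set (G → A)) : Prop :=
  (∃ M : Submodule K (G → A), (M : Set (G → A)) = S) ∧
    (∀ g : G, ∀ x ∈ S, (fun h => x (g⁻¹ * h)) ∈ S) ∧
    @IsClosed _ (prodiscreteTop G A) S

def IsSFT {G A : Type*} [Group G] (S : Set (G → A)) : Prop :=
  ∃ (D : Finset G) (P : Set (↥(D : Set G) → A)), S = shiftSigma G (D : Set G) P

def IsLCA (K : Type*) {G A : Type*} [Field K] [Group G] [AddCommGroup A] [Module K A]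
    (τ : (G → A) → (G → A)) : Prop :=
  IsLinearMap K τ ∧ ∃ (M : Finset G) (μ : (↥(M : Set G) → A) → A), IsLinearMap K μ ∧
    ∀ (x : G → A) (g : G), τ x g = μ (fun m : (M : Set G) => x (g * (m : G)))

/-- A set of configurations is "finitarily closed": any configuration that agrees with
some member on every finite window belongs to the set. -/
def FinClosed {G A : Type*} (S : Set (G → A)) : Prop :=
  ∀ x : G → A, (∀ E : Finset G, ∃ c ∈ S, ∀ g ∈ E, c g = x g) → x ∈ S


lemma finClosed_of_isClosed {G A : Type*} {S : Set (G → A)}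
    (h : @IsClosed _ (prodiscreteTop G A) S) : FinClosed S := by
  letI : TopologicalSpace A := ⊥
  haveI : DiscreteTopology A := ⟨rfl⟩
  have h' : IsClosed S := h
  intro x hx
  by_contra hxS
  have hop : IsOpen Sᶜ := h'.isOpen_compl
  rw [isOpen_pi_iff] at hop
  obtain ⟨I, u, hu, hsub⟩ := hop x hxS
  obtain ⟨c, hcS, hc⟩ := hx I
  refine hsub (fun i hi => ?_) hcS
  rw [hc i (Finset.mem_coe.1 hi)]
  exact (hu i (Finset.mem_coe.1 hi)).2

section Cosets
variable {K A : Type*} [Field K] [AddCommGroup A] [Module K A] [FiniteDimensional K A]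

/-- A downward-directed family of nonempty affine cosets of a finite-dimensional space
has nonempty intersection. -/
lemma directed_cosets_nonempty {ι : Type*} [Nonempty ι]
    (b : ι → A) (U : ι → Submodule K A)
    (hdir : ∀ i j, ∃ k, {a | a - b k ∈ U k} ⊆ {a | a - b i ∈ U i} ∩ {a | a - b j ∈ U j}) :
    (⋂ i, {a | a - b i ∈ U i}).Nonempty := by
  obtain ⟨i₀, hi₀⟩ : ∃ i₀, ∀ i, Module.finrank K (U i₀) ≤ Module.finrank K (U i) := by
    have hne : (Set.range fun i => Module.finrank K (U i)).Nonempty := Set.range_nonempty _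
    obtain ⟨i₀, hi₀⟩ := Nat.sInf_mem hne
    exact ⟨i₀, fun i => by simp only [] at hi₀; rw [show Module.finrank K (U i₀) = _ from hi₀]; exact Nat.sInf_le ⟨i, rfl⟩⟩
  refine ⟨b i₀, Set.mem_iInter.2 fun j => ?_⟩
  obtain ⟨k, hk⟩ := hdir i₀ j
  have hself : b k ∈ {a | a - b k ∈ U k} := by simp
  have hbk := hk hself
  have hb1 : b k - b i₀ ∈ U i₀ := hbk.1
  have hUk : U k ≤ U i₀ := by
    intro v hv
    have h1 : b k + v - b i₀ ∈ U i₀ :=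
      (hk (show b k + v ∈ {a | a - b k ∈ U k} by simpa using hv)).1
    exact (by simpa using sub_mem h1 hb1 : v ∈ U i₀)
  have heq : U k = U i₀ := Submodule.eq_of_le_of_finrank_le hUk (hi₀ k)
  have hmem : b i₀ ∈ {a | a - b k ∈ U k} := by
    show b i₀ - b k ∈ U k
    rw [heq]
    simpa using neg_mem hb1
  exact (hk hmem).2

end Cosets

section LinComp
variable {K A : Type*} [Field K] [AddCommGroup A] [Module K A] [FiniteDimensional K A]

lemma chain_finset_subset {α : Type*} {c : Set (Set α)} (hc : IsChain (· ⊆ ·) c)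
    (hne : c.Nonempty) (E : Finset α) (hE : ↑E ⊆ ⋃₀ c) : ∃ s ∈ c, ↑E ⊆ s := by
  classical
  induction E using Finset.induction with
  | empty => exact ⟨hne.choose, hne.choose_spec, by simp⟩
  | @insert a E ha ih =>
    obtain ⟨s, hs, hEs⟩ := ih (fun x hx => hE (by simp [Finset.mem_coe.1 hx]))
    obtain ⟨t, ht, hat⟩ := hE (Finset.mem_coe.2 (Finset.mem_insert_self a E))
    by_cases hst : s = t
    · exact ⟨t, ht, by
        intro x hx
        rcases Finset.mem_insert.1 (Finset.mem_coe.1 hx) with rfl | hxE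
        · exact hat
        · exact hst ▸ hEs (Finset.mem_coe.2 hxE)⟩
    rcases hc hs ht hst with h | h
    · exact ⟨t, ht, by
        intro x hx
        rcases Finset.mem_insert.1 (Finset.mem_coe.1 hx) with rfl | hxE
        · exact hat
        · exact h (hEs (Finset.mem_coe.2 hxE))⟩
    · exact ⟨s, hs, by
        intro x hx
        rcases Finset.mem_insert.1 (Finset.mem_coe.1 hx) with rfl | hxE
        · exact h hat
        · exact hEs (Finset.mem_coe.2 hxE)⟩

/-- Linear compactness of `G → A` for finite-dimensional `A`: a downward-directed family of
finitarily closed affine cosets has nonempty intersection. -/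
lemma lincomp {G : Type*} {ι : Type*} (p : ι → (G → A)) (V : ι → Submodule K (G → A))
    (hFC : ∀ i, FinClosed {x : G → A | x - p i ∈ V i})
    (hdir : ∀ i j, ∃ k, {x : G → A | x - p k ∈ V k} ⊆
      {x | x - p i ∈ V i} ∩ {x | x - p j ∈ V j}) :
    (⋂ i, {x : G → A | x - p i ∈ V i}).Nonempty := by
  classical
  rcases isEmpty_or_nonempty ι with hι | hι
  · exact ⟨0, by simp [Set.iInter_of_empty]⟩
  set C : ι → Set (G → A) := fun i => {x | x - p i ∈ V i} with hCdef
  have hCne : ∀ i, p i ∈ C i := fun i => by simp [hCdef]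
  -- the poset of coherent partial configurations (as functional graphs)
  set 𝒮 : Set (Set (G × A)) := {S | (∀ q ∈ S, ∀ r ∈ S, q.1 = r.1 → q.2 = r.2) ∧
    ∀ (i : ι) (E : Finset (G × A)), ↑E ⊆ S → ∃ c ∈ C i, ∀ q ∈ E, c q.1 = q.2} with h𝒮def
  have hSempty : (∅ : Set (G × A)) ∈ 𝒮 := by
    refine ⟨by simp, fun i E hE => ?_⟩
    have hcoe : (E : Set (G × A)) = ∅ := Set.subset_empty_iff.1 hE
    have hEe : E = ∅ := by exact_mod_cast hcoe
    subst hEe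
    exact ⟨p i, hCne i, by simp⟩
  have hzorn : ∀ c ⊆ 𝒮, IsChain (· ⊆ ·) c → c.Nonempty →
      ∃ ub ∈ 𝒮, ∀ s ∈ c, s ⊆ ub := by
    intro c hc hchain hcne
    refine ⟨⋃₀ c, ⟨?_, ?_⟩, fun s hs => Set.subset_sUnion_of_mem hs⟩
    · rintro q ⟨s, hs, hq⟩ r ⟨t, ht, hr⟩ hqr
      by_cases hst : s = t
      · exact (hc ht).1 q (hst ▸ hq) r hr hqr
      rcases hchain hs ht hst with h | h
      · exact (hc ht).1 q (h hq) r hr hqr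
      · exact (hc hs).1 q hq r (h hr) hqr
    · intro i E hE
      obtain ⟨s, hs, hEs⟩ := chain_finset_subset hchain hcne E hE
      exact (hc hs).2 i E hEs
  obtain ⟨S, -, hSmax⟩ := zorn_subset_nonempty 𝒮 hzorn ∅ hSempty
  have hS := hSmax.1
  -- the domain of the maximal element is everything
  have hdom : ∀ g : G, ∃ a, (g, a) ∈ S := by
    intro g₀
    by_contra hg₀
    push_neg at hg₀
    -- family of value-sets at g₀
    set κ := ι × {E : Finset (G × A) // ↑E ⊆ S} with hκdef
    haveI : Nonempty κ := ⟨Classical.arbitrary ι, ⟨∅, by simp⟩⟩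
    set B : κ → Set A := fun k =>
      {a | ∃ c ∈ C k.1, (∀ q ∈ k.2.1, c q.1 = q.2) ∧ c g₀ = a} with hBdef
    have hBcoset : ∀ k : κ, ∃ (b : A) (U : Submodule K A), B k = {a | a - b ∈ U} := by
      rintro ⟨i, E, hE⟩
      obtain ⟨c₀, hc₀C, hc₀E⟩ := hS.2 i E hE
      have hc₀V : c₀ - p i ∈ V i := hc₀C
      refine ⟨c₀ g₀, Submodule.map (LinearMap.proj g₀ : (G → A) →ₗ[K] A)
        (V i ⊓ ⨅ q ∈ E, LinearMap.ker (LinearMap.proj q.1 : (G → A) →ₗ[K] A)), ?_⟩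
      ext a
      constructor
      · rintro ⟨c, hcC, hcE, rfl⟩
        have hcV : c - p i ∈ V i := hcC
        have hsub : c - c₀ ∈ V i := by
          have h2 := sub_mem hcV hc₀V
          rwa [sub_sub_sub_cancel_right] at h2
        refine ⟨c - c₀, ⟨hsub, Submodule.mem_iInf _ |>.2 fun q => Submodule.mem_iInf _ |>.2
          fun hq => ?_⟩, rfl⟩
        show c q.1 - c₀ q.1 = 0
        rw [hcE q hq, hc₀E q hq, sub_self]
      · rintro ⟨v, ⟨hvV, hvK⟩, hv⟩
        have hvK' : ∀ q ∈ E, v q.1 = 0 := fun q hq =>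
          Submodule.mem_iInf _ |>.1 (Submodule.mem_iInf _ |>.1 hvK q) hq
        refine ⟨c₀ + v, ?_, fun q hq => ?_, ?_⟩
        · show c₀ + v - p i ∈ V i
          have h1 : c₀ + v - p i = (c₀ - p i) + v := by abel
          rw [h1]; exact add_mem hc₀C hvV
        · show (c₀ + v) q.1 = q.2
          have hv0 : v q.1 = 0 := hvK' q hq
          show c₀ q.1 + v q.1 = q.2
          rw [hv0, add_zero]; exact hc₀E q hq
        · show c₀ g₀ + v g₀ = a
          have hv' : v g₀ = a - c₀ g₀ := hv
          rw [hv']; abel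
    choose bb UU hBU using hBcoset
    have hBdir : ∀ k k' : κ, ∃ k'' : κ,
        {a | a - bb k'' ∈ UU k''} ⊆ {a | a - bb k ∈ UU k} ∩ {a | a - bb k' ∈ UU k'} := by
      rintro ⟨i, E, hE⟩ ⟨j, F, hF⟩
      obtain ⟨l, hl⟩ := hdir i j
      refine ⟨⟨l, E ∪ F, by rw [Finset.coe_union]; exact Set.union_subset hE hF⟩, ?_⟩
      rw [← hBU, ← hBU, ← hBU]
      rintro a ⟨c, hcC, hcE, rfl⟩
      exact ⟨⟨c, (hl hcC).1, fun q hq => hcE q (Finset.mem_union_left _ hq), rfl⟩,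
        ⟨c, (hl hcC).2, fun q hq => hcE q (Finset.mem_union_right _ hq), rfl⟩⟩
    obtain ⟨a, ha⟩ := directed_cosets_nonempty bb UU hBdir
    have haB : ∀ k : κ, a ∈ B k := fun k => (hBU k) ▸ (Set.mem_iInter.1 ha k)
    -- extend S, contradicting maximality
    have hS' : insert (g₀, a) S ∈ 𝒮 := by
      constructor
      · rintro q (rfl | hq) r (rfl | hr) hqr
        · rfl
        · exact absurd (show (g₀, r.2) ∈ S from by
            have : r = (g₀, r.2) := Prod.ext hqr.symm rfl
            exact this ▸ hr) (hg₀ r.2)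
        · exact absurd (show (g₀, q.2) ∈ S from by
            have : q = (g₀, q.2) := Prod.ext hqr rfl
            exact this ▸ hq) (hg₀ q.2)
        · exact hS.1 q hq r hr hqr
      · intro i E hE
        have hE' : ↑(E.erase (g₀, a)) ⊆ S := by
          intro q hq
          obtain ⟨hne, hqE⟩ := Finset.mem_erase.1 (Finset.mem_coe.1 hq)
          rcases hE (Finset.mem_coe.2 hqE) with h | h
          · exact absurd h hne
          · exact h
        obtain ⟨c, hcC, hcE, hcg⟩ := haB ⟨i, E.erase (g₀, a), hE'⟩
        refine ⟨c, hcC, fun q hq => ?_⟩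
        by_cases hqa : q = (g₀, a)
        · subst hqa; exact hcg
        · exact hcE q (Finset.mem_erase.2 ⟨hqa, hq⟩)
    have := hSmax.2 hS' (Set.subset_insert _ _) (Set.mem_insert _ _)
    exact hg₀ a this
  -- build the global configuration
  choose xf hxf using hdom
  refine ⟨xf, Set.mem_iInter.2 fun i => hFC i xf fun E => ?_⟩
  obtain ⟨c, hcC, hcE⟩ := hS.2 i (E.image fun g => (g, xf g)) (by
    intro q hq
    obtain ⟨g, hg, rfl⟩ := Finset.mem_image.1 (Finset.mem_coe.1 hq)
    exact hxf g)
  exact ⟨c, hcC, fun g hg => hcE (g, xf g) (Finset.mem_image_of_mem _ hg)⟩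

end LinComp

section CA
variable {G K A : Type*} [Group G] [Field K] [AddCommGroup A] [Module K A]
  [FiniteDimensional K A]

/-- The image of a finitarily-closed submodule of configurations under a linear cellular
automaton is again (the coercion of) a submodule which is finitarily closed. -/
lemma image_finclosed (τ : (G → A) → (G → A)) (hτ : IsLCA K τ)
    (V' : Submodule K (G → A)) (hFC : FinClosed (V' : Set (G → A))) :
    (∃ W : Submodule K (G → A), (W : Set (G → A)) = τ '' ↑V') ∧
      FinClosed (τ '' (V' : Set (G → A))) := by
  classical
  obtain ⟨hτlin, M, μ, hμ, hloc⟩ := hτ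
  set τl : (G → A) →ₗ[K] (G → A) := IsLinearMap.mk' τ hτlin with hτl
  refine ⟨⟨V'.map τl, Submodule.map_coe _ _⟩, ?_⟩
  intro x hx
  have hcos : ∀ E : Finset G, ∃ y₀ : G → A, y₀ ∈ V' ∧ ∀ g ∈ E, τ y₀ g = x g := by
    intro E
    obtain ⟨c, ⟨y₀, hy₀, rfl⟩, hc⟩ := hx E
    exact ⟨y₀, hy₀, hc⟩
  choose y₀ hy₀V hy₀E using hcos
  set U : Finset G → Submodule K (G → A) := fun E =>
    V' ⊓ ⨅ g ∈ E, LinearMap.ker ((LinearMap.proj g : (G → A) →ₗ[K] A).comp τl) with hUdef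
  have hrep : ∀ E : Finset G,
      {y : G → A | y - y₀ E ∈ U E} = {y | y ∈ V' ∧ ∀ g ∈ E, τ y g = x g} := by
    intro E
    ext y
    constructor
    · intro hy
      have h1 : y - y₀ E ∈ V' := (Submodule.mem_inf.1 hy).1
      have h2 := (Submodule.mem_inf.1 hy).2
      refine ⟨by simpa using add_mem h1 (hy₀V E), fun g hg => ?_⟩
      have h3 : ((LinearMap.proj g : (G → A) →ₗ[K] A).comp τl) (y - y₀ E) = 0 :=
        Submodule.mem_iInf _ |>.1 (Submodule.mem_iInf _ |>.1 h2 g) hg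
      rw [map_sub] at h3
      have h4 : τ y g = τ (y₀ E) g := sub_eq_zero.1 h3
      rw [h4]
      exact hy₀E E g hg
    · rintro ⟨hyV, hyE⟩
      refine Submodule.mem_inf.2 ⟨sub_mem hyV (hy₀V E),
        Submodule.mem_iInf _ |>.2 fun g => Submodule.mem_iInf _ |>.2 fun hg => ?_⟩
      show ((LinearMap.proj g : (G → A) →ₗ[K] A).comp τl) (y - y₀ E) = 0
      rw [map_sub]
      show τ y g - τ (y₀ E) g = 0
      rw [hyE g hg, hy₀E E g hg, sub_self]
  have hFCrep : ∀ E : Finset G, FinClosed {y : G → A | y ∈ V' ∧ ∀ g ∈ E, τ y g = x g} := by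
    intro E z hz
    constructor
    · apply hFC
      intro F
      obtain ⟨c, hc, hagree⟩ := hz F
      exact ⟨c, hc.1, hagree⟩
    · intro g hg
      obtain ⟨c, hc, hagree⟩ := hz (M.image fun m => g * m)
      have hzc : τ z g = τ c g := by
        rw [hloc z g, hloc c g]
        congr 1
        funext m
        exact (hagree (g * ↑m) (Finset.mem_image_of_mem _ (Finset.mem_coe.1 m.2))).symm
      rw [hzc]
      exact hc.2 g hg
  have hFC' : ∀ E : Finset G, FinClosed {y : G → A | y - y₀ E ∈ U E} := by
    intro E
    rw [hrep E]
    exact hFCrep E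
  have hdir : ∀ E F : Finset G, ∃ D : Finset G, {y : G → A | y - y₀ D ∈ U D} ⊆
      {y | y - y₀ E ∈ U E} ∩ {y | y - y₀ F ∈ U F} := by
    intro E F
    refine ⟨E ∪ F, ?_⟩
    rw [hrep, hrep, hrep]
    rintro y ⟨hyV, hy⟩
    exact ⟨⟨hyV, fun g hg => hy g (Finset.mem_union_left _ hg)⟩,
      ⟨hyV, fun g hg => hy g (Finset.mem_union_right _ hg)⟩⟩
  obtain ⟨y, hy⟩ := lincomp y₀ U hFC' hdir
  have hmem : ∀ E : Finset G, y ∈ {y : G → A | y ∈ V' ∧ ∀ g ∈ E, τ y g = x g} := by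
    intro E
    rw [← hrep E]
    exact Set.mem_iInter.1 hy E
  refine ⟨y, (hmem ∅).1, funext fun g => ?_⟩
  exact (hmem {g}).2 g (Finset.mem_singleton_self g)

end CA


theorem stmt17 {G K A : Type*} [Group G] [Field K] [AddCommGroup A] [Module K A]
    [FiniteDimensional K A] (S : Set (G → A)) (hlin : IsLinearSubshift K S)
    (hSFT : IsSFT S)
    (τ : (G → A) → (G → A)) (hτ : IsLCA K τ) (hmap : Set.MapsTo τ S S) :
    (∃ n : ℕ, 1 ≤ n ∧ ∀ x ∈ S, τ^[n] x = 0) ↔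
      (⋂ (n : ℕ) (_ : 1 ≤ n), τ^[n] '' S) = {0} := by
  
  classical
  obtain ⟨⟨V₀, hV₀⟩, hshiftS, hclosedS⟩ := hlin
  have h0S : (0 : G → A) ∈ S := by rw [← hV₀]; exact V₀.zero_mem
  have hτ0 : τ 0 = 0 := map_zero (IsLinearMap.mk' τ hτ.1)
  constructor
  · rintro ⟨n, hn1, hn⟩
    apply subset_antisymm
    · intro y hy
      have hyn := Set.mem_iInter.1 (Set.mem_iInter.1 hy n) hn1
      obtain ⟨z, hzS, rfl⟩ := hyn
      exact Set.mem_singleton_iff.2 (hn z hzS)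
    · intro y hy
      rw [Set.mem_singleton_iff] at hy
      subst hy
      refine Set.mem_iInter.2 fun m => Set.mem_iInter.2 fun _ => ⟨0, h0S, ?_⟩
      exact Function.iterate_fixed hτ0 m
  · intro hΩ
    have hFC₀ : FinClosed S := finClosed_of_isClosed hclosedS
    have key : ∀ n : ℕ, (∃ Vn : Submodule K (G → A), (Vn : Set (G → A)) = τ^[n] '' S) ∧
        FinClosed (τ^[n] '' S) := by
      intro n
      induction n with
      | zero =>
        rw [Function.iterate_zero, Set.image_id]
        exact ⟨⟨V₀, hV₀⟩, hFC₀⟩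
      | succ n ih =>
        obtain ⟨⟨Vn, hVn⟩, hFCn⟩ := ih
        have himg : τ^[n + 1] '' S = τ '' (τ^[n] '' S) := by
          rw [Function.iterate_succ', Set.image_comp]
        rw [himg, ← hVn]
        exact image_finclosed τ hτ Vn (by rw [hVn]; exact hFCn)
      -- done
    have hVex : ∀ n, ∃ Vn : Submodule K (G → A), (Vn : Set (G → A)) = τ^[n] '' S :=
      fun n => (key n).1
    have hFCn : ∀ n, FinClosed (τ^[n] '' S) := fun n => (key n).2
    choose Vn hVn using hVex
    have hdec1 : ∀ n : ℕ, τ^[n + 1] '' S ⊆ τ^[n] '' S := by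
      intro n
      rw [Function.iterate_succ, Set.image_comp]
      exact Set.image_mono hmap.image_subset
    have hmono : ∀ m n : ℕ, m ≤ n → τ^[n] '' S ⊆ τ^[m] '' S := by
      intro m n hmn
      induction hmn with
      | refl => exact subset_rfl
      | step h ih => exact (hdec1 _).trans ih
    set W : ℕ → Submodule K A := fun n => (Vn n).map (LinearMap.proj (1 : G)) with hWdef
    have hWmono : ∀ m n : ℕ, m ≤ n → W n ≤ W m := by
      intro m n hmn
      apply Submodule.map_mono
      change Vn n ≤ Vn m
      rw [← SetLike.coe_subset_coe, hVn, hVn]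
      exact hmono m n hmn
    obtain ⟨N, hN⟩ : ∃ N : ℕ, ∀ n, Module.finrank K (W N) ≤ Module.finrank K (W n) := by
      have hne : (Set.range fun n => Module.finrank K (W n)).Nonempty := Set.range_nonempty _
      obtain ⟨N, hN⟩ := Nat.sInf_mem hne
      refine ⟨N, fun n => ?_⟩
      simp only [] at hN
      rw [show Module.finrank K (W N) = _ from hN]
      exact Nat.sInf_le ⟨n, rfl⟩
    have hWeq : ∀ n, N ≤ n → W n = W N := by
      intro n hn
      haveI : FiniteDimensional K (W N) := FiniteDimensional.finiteDimensional_submodule (W N)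
      exact Submodule.eq_of_le_of_finrank_le (hWmono N n hn) (hN n)
    have hWbot : W N = ⊥ := by
      by_contra hne
      obtain ⟨a, haW, ha0⟩ := Submodule.ne_bot_iff _ |>.1 hne
      have hpt : ∀ n : ℕ, ∃ y : G → A, y ∈ Vn (N + 1 + n) ∧ y 1 = a := by
        intro n
        have h1 : a ∈ W (N + 1 + n) := by
          rw [hWeq (N + 1 + n) (by omega)]; exact haW
        obtain ⟨y, hy, hy1⟩ := Submodule.mem_map.1 h1
        exact ⟨y, hy, hy1⟩
      choose y₀ hy₀V hy₀1 using hpt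
      set U : ℕ → Submodule K (G → A) := fun n =>
        Vn (N + 1 + n) ⊓ LinearMap.ker (LinearMap.proj (1 : G) : (G → A) →ₗ[K] A) with hUdef
      have hrep : ∀ n : ℕ, {y : G → A | y - y₀ n ∈ U n}
          = {y | y ∈ τ^[N + 1 + n] '' S ∧ y 1 = a} := by
        intro n
        ext y
        constructor
        · intro hy
          obtain ⟨h1, h2⟩ := Submodule.mem_inf.1 hy
          have hyV : y ∈ Vn (N + 1 + n) := by simpa using add_mem h1 (hy₀V n)
          refine ⟨by rw [← hVn (N + 1 + n)]; exact hyV, ?_⟩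
          have h2' : y 1 - y₀ n 1 = 0 := h2
          rw [sub_eq_zero] at h2'
          rw [h2', hy₀1 n]
        · rintro ⟨hyS, hy1⟩
          have hyV : y ∈ Vn (N + 1 + n) := by rw [← hVn (N + 1 + n)] at hyS; exact hyS
          refine Submodule.mem_inf.2 ⟨sub_mem hyV (hy₀V n), ?_⟩
          show y 1 - y₀ n 1 = 0
          rw [hy1, hy₀1 n, sub_self]
      have hFCn' : ∀ n, FinClosed {y : G → A | y - y₀ n ∈ U n} := by
        intro n
        rw [hrep n]
        intro z hz
        constructor
        · apply hFCn (N + 1 + n)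
          intro F
          obtain ⟨c, hc, hagree⟩ := hz F
          exact ⟨c, hc.1, hagree⟩
        · obtain ⟨c, hc, hagree⟩ := hz {1}
          rw [← hagree 1 (Finset.mem_singleton_self 1)]
          exact hc.2
      have hdir : ∀ n m : ℕ, ∃ k, {y : G → A | y - y₀ k ∈ U k} ⊆
          {y | y - y₀ n ∈ U n} ∩ {y | y - y₀ m ∈ U m} := by
        intro n m
        refine ⟨max n m, ?_⟩
        rw [hrep, hrep, hrep]
        rintro y ⟨hyS, hy1⟩
        exact ⟨⟨hmono _ _ (Nat.add_le_add_left (le_max_left n m) _) hyS, hy1⟩,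
          ⟨hmono _ _ (Nat.add_le_add_left (le_max_right n m) _) hyS, hy1⟩⟩
      obtain ⟨z, hz⟩ := lincomp y₀ U hFCn' hdir
      have hzmem : ∀ n : ℕ, z ∈ {y : G → A | y ∈ τ^[N + 1 + n] '' S ∧ y 1 = a} := by
        intro n
        rw [← hrep n]
        exact Set.mem_iInter.1 hz n
      have hzΩ : z ∈ ⋂ (n : ℕ) (_ : 1 ≤ n), τ^[n] '' S := by
        refine Set.mem_iInter.2 fun m => Set.mem_iInter.2 fun hm => ?_
        exact hmono m (N + 1 + m) (by omega) (hzmem m).1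
      rw [hΩ] at hzΩ
      have hz0 : z = 0 := hzΩ
      apply ha0
      rw [← (hzmem 0).2, hz0]
      simp
    refine ⟨N + 1, by omega, fun x hxS => ?_⟩
    obtain ⟨hτlin, M, μ, hμ, hloc⟩ := hτ
    have hcomm : ∀ (g : G) (x : G → A),
        τ (fun h => x (g⁻¹ * h)) = fun h => τ x (g⁻¹ * h) := by
      intro g x
      funext h
      show τ (fun h' => x (g⁻¹ * h')) h = τ x (g⁻¹ * h)
      rw [hloc, hloc]
      congr 1
      funext m
      show x (g⁻¹ * (h * ↑m)) = x ((g⁻¹ * h) * ↑m)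
      rw [mul_assoc]
    have hcommN : ∀ (n : ℕ) (g : G) (x : G → A),
        τ^[n] (fun h => x (g⁻¹ * h)) = fun h => τ^[n] x (g⁻¹ * h) := by
      intro n
      induction n with
      | zero => intro g x; rfl
      | succ n ih =>
        intro g x
        rw [Function.iterate_succ_apply, Function.iterate_succ_apply, hcomm]
        exact ih g (τ x)
    have hval : ∀ y ∈ τ^[N + 1] '' S, y 1 = 0 := by
      intro y hy
      have hyV : y ∈ Vn (N + 1) := by rw [← hVn (N + 1)] at hy; exact hy
      have hmem : y 1 ∈ W (N + 1) := Submodule.mem_map_of_mem hyV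
      rw [hWeq (N + 1) (by omega), hWbot] at hmem
      simpa using hmem
    funext g
    have hxg : (fun h => x (g * h)) ∈ S := by
      have := hshiftS g⁻¹ x hxS
      simpa using this
    have himg : (fun h => τ^[N + 1] x (g * h)) ∈ τ^[N + 1] '' S := by
      refine ⟨fun h => x (g * h), hxg, ?_⟩
      have := hcommN (N + 1) g⁻¹ x
      simpa using this
    have hv := hval _ himg
    simpa using hv
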